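/- (Closed formula for π, Remark 2.4 of the paper.) For every integer N ≥ 1 and every rational number μ, the identity (N−1)! · π_N(μ) = ∑_{I composition of N} m_I · q_{N, I_1}(μ) · X_I holds in F, where I_1 denotes the leftmost entry of the composition I, and for 1 ≤ a ≤ N, q_{N,a} ∈ ℚ[X] is the unique polynomial with (X − (N−a)) · q_{N,a}(X) = X(X−1)⋯(X−N+1) (this quotient is exact since N−a ∈ {0,…,N−1} is a root of the descending factorial). -/

import Mathlib

open Finset

/-- The signed Stirling numbers of the first kind: `s n k` is the coefficient of `X^k`
in the descending factorial `X(X-1)⋯(X-n+1)`. -/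
noncomputable def stirlingFirst (n k : ℕ) : ℤ := (descPochhammer ℤ n).coeff k

/-- The multiplicity `m_I ∈ ℚ` of a composition `I = (I_1, …, I_r)` of `N = I_1 + ⋯ + I_r`:
`m_I = -(-1)^r · N! · (N-1)! · ∏_{t=1}^r 1/(I_t!(I_t-1)!) · ∏_{t=1}^{r-1} 1/(I_t+I_{t+1})`. -/
noncomputable def mult (I : List ℕ) : ℚ :=
  -(-1 : ℚ) ^ I.length * (Nat.factorial I.sum : ℚ) * (Nat.factorial (I.sum - 1) : ℚ)
    * (I.map fun a => ((Nat.factorial a : ℚ) * (Nat.factorial (a - 1) : ℚ))⁻¹).prod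
    * ((I.zip I.tail).map fun p => ((p.1 + p.2 : ℕ) : ℚ)⁻¹).prod

/-- The higher multiplicities `m_I^{(k)}`: `m_I^{(1)} = m_I`, and for a composition `I`
of `N` with first entry `a` and `2 ≤ k ≤ N-1`,
`m_I^{(k)} = (∑_{i=0}^{k-1} s(N, N-i)·(N-a)^{k-1-i}) · (N-k)!/(N-1)! · m_I`
(with the convention `0^0 = 1`). -/
noncomputable def multK (k : ℕ) (I : List ℕ) : ℚ :=
  if k = 1 then mult I
  else
    (∑ i ∈ Finset.range k,
        (stirlingFirst I.sum (I.sum - i) : ℚ) * ((I.sum - I.headI : ℕ) : ℚ) ^ (k - 1 - i))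
      * (Nat.factorial (I.sum - k) : ℚ) / (Nat.factorial (I.sum - 1) : ℚ) * mult I

/-- The free associative `ℚ`-algebra on generators `X_1, X_2, X_3, …`. -/
abbrev F : Type := FreeAlgebra ℚ ℕ

/-- The noncommutative monomial `X_I = X_{I_1} ⋯ X_{I_r}` attached to a composition. -/
noncomputable def XI (I : List ℕ) : F := (I.map (FreeAlgebra.ι ℚ)).prod

/-- The operator `C_N^{(k)} = ∑_{|I|=N} m_I^{(k)} X_I` for `1 ≤ k ≤ N-1`, and
`C_N^{(N)} = (-1)^{N-1} X_N`. -/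
noncomputable def CN (N k : ℕ) : F :=
  if k = N then ((-1 : ℚ) ^ (N - 1)) • FreeAlgebra.ι ℚ N
  else ∑ I : Composition N, multK k I.blocks • XI I.blocks

/-- The polynomial `π_N(μ) = ∑_{k=1}^N (μ^{N-k}/(N-k)!) C_N^{(k)}`. -/
noncomputable def piN (N : ℕ) (μ : ℚ) : F :=
  ∑ k ∈ Finset.Icc 1 N, (μ ^ (N - k) / (Nat.factorial (N - k) : ℚ)) • CN N k

section Aux
open Polynomial

noncomputable def bcoef (N a k : ℕ) : ℚ :=
  ∑ i ∈ Finset.range k, (stirlingFirst N (N - i) : ℚ) * ((N - a : ℕ) : ℚ) ^ (k - 1 - i)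

lemma stirling_cast (N m : ℕ) :
    (descPochhammer ℚ N).coeff m = (stirlingFirst N m : ℚ) := by
  rw [stirlingFirst, ← descPochhammer_map (Int.castRingHom ℚ) N, Polynomial.coeff_map]
  rfl

lemma bcoef_succ (N a k : ℕ) :
    bcoef N a (k + 1)
      = (stirlingFirst N (N - k) : ℚ) + ((N - a : ℕ) : ℚ) * bcoef N a k := by
  unfold bcoef
  rw [Finset.sum_range_succ, Finset.mul_sum]
  have step : ∀ i ∈ Finset.range k,
      (stirlingFirst N (N - i) : ℚ) * ((N - a : ℕ) : ℚ) ^ (k + 1 - 1 - i)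
        = ((N - a : ℕ) : ℚ) * ((stirlingFirst N (N - i) : ℚ) * ((N - a : ℕ) : ℚ) ^ (k - 1 - i)) := by
    intro i hi
    simp only [Finset.mem_range] at hi
    rw [show k + 1 - 1 - i = (k - 1 - i) + 1 from by omega, pow_succ]; ring
  rw [Finset.sum_congr rfl step]
  simp [add_comm]

lemma stirling_top (N : ℕ) : stirlingFirst N N = 1 := by
  have h := (monic_descPochhammer ℤ N).coeff_natDegree
  rwa [descPochhammer_natDegree] at h

lemma bcoef_one (N a : ℕ) : bcoef N a 1 = 1 := by
  simp [bcoef, stirling_top]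

lemma stirling_zero (N : ℕ) (hN : 1 ≤ N) : stirlingFirst N 0 = 0 := by
  rw [stirlingFirst, Polynomial.coeff_zero_eq_eval_zero]
  exact descPochhammer_ne_zero_eval_zero (R := ℤ) (Nat.one_le_iff_ne_zero.mp hN)

lemma mul_bcoef_top (N a : ℕ) (hN : 1 ≤ N) :
    ((N - a : ℕ) : ℚ) * bcoef N a N
      = (descPochhammer ℚ N).eval ((N - a : ℕ) : ℚ) := by
  have heval : (descPochhammer ℚ N).eval ((N - a : ℕ) : ℚ)
      = ∑ m ∈ Finset.range (N + 1),
          (stirlingFirst N m : ℚ) * ((N - a : ℕ) : ℚ) ^ m := by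
    rw [Polynomial.eval_eq_sum_range' (n := N + 1)
        (by rw [descPochhammer_natDegree]; omega)]
    exact Finset.sum_congr rfl fun m _ => by rw [stirling_cast]
  rw [heval, Finset.sum_range_succ']
  rw [stirling_zero N hN]
  rw [bcoef, Finset.mul_sum, ← Finset.sum_range_reflect
    (fun m => (stirlingFirst N (m + 1) : ℚ) * ((N - a : ℕ) : ℚ) ^ (m + 1)) N]
  simp only [Int.cast_zero, zero_mul, pow_zero, mul_one, add_zero]
  refine Finset.sum_congr rfl fun i hi => ?_
  simp only [Finset.mem_range] at hi
  rw [show N - i = N - 1 - i + 1 from by omega, pow_succ]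
  ring

lemma quotient_eq (N a : ℕ) (hN : 1 ≤ N) (qa : Polynomial ℚ)
    (hqa : (X - C ((N - a : ℕ) : ℚ)) * qa = descPochhammer ℚ N) :
    qa = ∑ k ∈ Finset.range N, C (bcoef N a (k + 1)) * X ^ (N - 1 - k) := by
  set r : ℚ := ((N - a : ℕ) : ℚ) with hr
  have hroot : (descPochhammer ℚ N).eval r = 0 := by
    have h := congrArg (Polynomial.eval r) hqa
    simpa using h.symm
  have hbtop : bcoef N a (N + 1) = 0 := by
    rw [bcoef_succ, mul_bcoef_top N a hN, ← hr, hroot, Nat.sub_self,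
      stirling_zero N hN]
    simp
  apply mul_left_cancel₀ (Polynomial.X_sub_C_ne_zero r)
  rw [hqa, Finset.mul_sum]
  have expand : ∀ k ∈ Finset.range N,
      (X - C r) * (C (bcoef N a (k + 1)) * X ^ (N - 1 - k))
        = ((fun j => C (bcoef N a (j + 1)) * X ^ (N - j)) k
            - (fun j => C (bcoef N a (j + 1)) * X ^ (N - j)) (k + 1))
          + C ((descPochhammer ℚ N).coeff (N - 1 - k)) * X ^ (N - 1 - k) := by
    intro k hk
    simp only [Finset.mem_range] at hk
    simp only []
    rw [stirling_cast]
    have h2 : bcoef N a (k + 2)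
        = (stirlingFirst N (N - (k + 1)) : ℚ) + r * bcoef N a (k + 1) :=
      bcoef_succ N a (k + 1)
    rw [show N - k = (N - 1 - k) + 1 from by omega, pow_succ]
    rw [show N - (k + 1) = N - 1 - k from by omega] at h2 ⊢
    rw [h2, ← stirling_cast]
    simp only [map_add, map_mul]
    ring
  rw [Finset.sum_congr rfl expand, Finset.sum_add_distrib,
    Finset.sum_range_sub' (fun j => C (bcoef N a (j + 1)) * X ^ (N - j))]
  rw [Finset.sum_range_reflect (fun m => C ((descPochhammer ℚ N).coeff m) * X ^ m) N]
  have hcN : (descPochhammer ℚ N).coeff N = 1 := by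
    rw [stirling_cast, stirling_top]; norm_num
  rw [hbtop, bcoef_one]
  simp only [map_one, one_mul, map_zero, zero_mul, sub_zero, Nat.sub_zero]
  conv_lhs => rw [(descPochhammer ℚ N).as_sum_range' (N + 1)
    (by rw [descPochhammer_natDegree]; omega)]
  rw [Finset.sum_range_succ, hcN, ← Polynomial.X_pow_eq_monomial]
  simp only [Polynomial.C_mul_X_pow_eq_monomial]
  exact add_comm _ _

lemma quotient_eval (N a : ℕ) (hN : 1 ≤ N) (qa : Polynomial ℚ)
    (hqa : (X - C ((N - a : ℕ) : ℚ)) * qa = descPochhammer ℚ N) (μ : ℚ) :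
    qa.eval μ = ∑ k ∈ Finset.range N, bcoef N a (k + 1) * μ ^ (N - 1 - k) := by
  rw [quotient_eq N a hN qa hqa]
  simp [Polynomial.eval_finset_sum]

lemma bcoef_top_of_lt (N a : ℕ) (hN : 1 ≤ N) (ha : a < N) (qa : Polynomial ℚ)
    (hqa : (X - C ((N - a : ℕ) : ℚ)) * qa = descPochhammer ℚ N) :
    bcoef N a N = 0 := by
  have hroot : (descPochhammer ℚ N).eval ((N - a : ℕ) : ℚ) = 0 := by
    have h := congrArg (Polynomial.eval ((N - a : ℕ) : ℚ)) hqa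
    simpa using h.symm
  have h := mul_bcoef_top N a hN
  rw [hroot] at h
  have hr0 : ((N - a : ℕ) : ℚ) ≠ 0 := Nat.cast_ne_zero.mpr (by omega)
  exact (mul_eq_zero.mp h).resolve_left hr0

lemma stirling_one : ∀ N : ℕ, 1 ≤ N →
    stirlingFirst N 1 = (-1) ^ (N - 1) * (Nat.factorial (N - 1) : ℤ) := by
  intro N
  induction N with
  | zero => omega
  | succ n ih =>
    intro _
    by_cases hn : n = 0
    · subst hn; simp [stirlingFirst, descPochhammer_one]
    · have h1 : 1 ≤ n := by omega
      have hc0 : (descPochhammer ℤ n).coeff 0 = 0 := stirling_zero n h1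
      have key : stirlingFirst (n + 1) 1
          = (descPochhammer ℤ n).coeff 0 - (descPochhammer ℤ n).coeff 1 * (n : ℤ) := by
        rw [stirlingFirst, descPochhammer_succ_right, ← Polynomial.C_eq_natCast,
          mul_sub, Polynomial.coeff_sub, Polynomial.coeff_mul_C]
        congr 1
        exact Polynomial.coeff_mul_X _ 0
      rw [key, hc0, zero_sub]
      have ihv : (descPochhammer ℤ n).coeff 1
          = (-1) ^ (n - 1) * (Nat.factorial (n - 1) : ℤ) := ih h1
      rw [ihv]
      obtain ⟨m, rfl⟩ : ∃ m, n = m + 1 := ⟨n - 1, by omega⟩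
      simp only [Nat.add_sub_cancel, Nat.factorial_succ, pow_succ]
      push_cast [Nat.factorial_zero]
      ring

lemma bcoef_self (N : ℕ) (hN : 1 ≤ N) : bcoef N N N = (stirlingFirst N 1 : ℚ) := by
  unfold bcoef
  rw [Finset.sum_eq_single (N - 1)]
  · rw [show N - (N - 1) = 1 from by omega, Nat.sub_self,
      show N - 1 - (N - 1) = 0 from by omega]
    simp
  · intro i hi hne
    simp only [Finset.mem_range] at hi
    rw [Nat.sub_self, Nat.cast_zero, zero_pow (by omega : N - 1 - i ≠ 0), mul_zero]
  · intro h
    exact absurd (Finset.mem_range.mpr (by omega)) h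

lemma mult_single (N : ℕ) (hN : 1 ≤ N) : mult [N] = 1 := by
  have h1 : (Nat.factorial N : ℚ) ≠ 0 := Nat.cast_ne_zero.mpr (Nat.factorial_ne_zero N)
  have h2 : (Nat.factorial (N - 1) : ℚ) ≠ 0 := Nat.cast_ne_zero.mpr (Nat.factorial_ne_zero _)
  simp [mult]
  field_simp

lemma comp_blocks_ne_nil {N : ℕ} (hN : 1 ≤ N) (I : Composition N) : I.blocks ≠ [] := by
  intro h
  have hs := I.blocks_sum
  rw [h] at hs
  simp at hs
  omega

lemma comp_headI_bounds {N : ℕ} (hN : 1 ≤ N) (I : Composition N) :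
    1 ≤ I.blocks.headI ∧ I.blocks.headI ≤ N := by
  have hs := I.blocks_sum
  rcases hb : I.blocks with _ | ⟨x, t⟩
  · exact absurd hb (comp_blocks_ne_nil hN I)
  · rw [hb] at hs
    simp only [List.sum_cons] at hs
    refine ⟨I.blocks_pos (by rw [hb]; simp), ?_⟩
    simp only [List.headI]
    omega

lemma comp_eq_single {N : ℕ} (hN : 0 < N) (I : Composition N)
    (h : I.blocks.headI = N) : I = Composition.single N hN := by
  have hs := I.blocks_sum
  have hblocks : I.blocks = [N] := by
    rcases hb : I.blocks with _ | ⟨x, t⟩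
    · exact absurd hb (comp_blocks_ne_nil hN I)
    · rw [hb] at hs h
      simp only [List.headI] at h
      subst h
      simp only [List.sum_cons] at hs
      rcases t with _ | ⟨y, s⟩
      · rfl
      · exfalso
        have hy : 0 < y := I.blocks_pos (by rw [hb]; simp)
        simp only [List.sum_cons] at hs
        omega
  rw [Composition.ext_iff, hblocks, Composition.single_blocks]

end Aux

/-- Remark 2.4 of the paper (closed formula for `π_N`): if for each `1 ≤ a ≤ N`,
`q a` is the (unique) polynomial with `(X - (N-a))·(q a) = X(X-1)⋯(X-N+1)`, then
`(N-1)! · π_N(μ) = ∑_{|I|=N} m_I · (q I_1)(μ) · X_I`, where `I_1` is the leftmost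
entry of the composition `I`. -/
theorem piN_closed_formula (N : ℕ) (hN : 1 ≤ N) (q : ℕ → Polynomial ℚ)
    (hq : ∀ a : ℕ, 1 ≤ a → a ≤ N →
      (Polynomial.X - Polynomial.C ((N - a : ℕ) : ℚ)) * q a = descPochhammer ℚ N)
    (μ : ℚ) :
    (Nat.factorial (N - 1) : ℚ) • piN N μ
      = ∑ I : Composition N,
          (mult I.blocks * (q I.blocks.headI).eval μ) • XI I.blocks := by
  classical
  have hN0 : 0 < N := hN
  have hfac1 : ((Nat.factorial (N - 1) : ℕ) : ℚ) ≠ 0 :=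
    Nat.cast_ne_zero.mpr (Nat.factorial_ne_zero _)
  have hCN : ∀ k ∈ Finset.Icc 1 N, CN N k
      = ∑ I : Composition N,
          (if k = N then (if I = Composition.single N hN0 then ((-1 : ℚ)) ^ (N - 1) else 0)
           else multK k I.blocks) • XI I.blocks := by
    intro k hk
    by_cases h : k = N
    · rw [CN, if_pos h]
      simp only [h, eq_self_iff_true, if_true]
      have hsplit : ∀ I : Composition N,
          (if I = Composition.single N hN0 then ((-1 : ℚ)) ^ (N - 1) else 0) • XI I.blocks
            = if I = Composition.single N hN0 then ((-1 : ℚ)) ^ (N - 1) • XI I.blocks else 0 := by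
        intro I; split <;> simp
      rw [Finset.sum_congr rfl fun I _ => hsplit I,
        Finset.sum_ite_eq' Finset.univ (Composition.single N hN0)
          (fun I => ((-1 : ℚ)) ^ (N - 1) • XI I.blocks)]
      simp [XI, Composition.single_blocks]
    · rw [CN, if_neg h]
      exact Finset.sum_congr rfl fun I _ => by rw [if_neg h]
  rw [piN, Finset.smul_sum]
  rw [Finset.sum_congr rfl fun k hk => by rw [hCN k hk]]
  simp only [Finset.smul_sum, smul_smul]
  rw [Finset.sum_comm]
  refine Finset.sum_congr rfl fun I _ => ?_
  rw [← Finset.sum_smul]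
  congr 1
  obtain ⟨ha1, haN⟩ := comp_headI_bounds hN I
  set a := I.blocks.headI with hadef
  have hqa := hq a ha1 haN
  rw [quotient_eval N a hN (q a) hqa μ, Finset.mul_sum]
  rw [← Finset.Ico_add_one_right_eq_Icc, Finset.sum_Ico_eq_sum_range]
  simp only [Nat.succ_sub_one, Nat.add_sub_cancel]
  refine Finset.sum_congr rfl fun j hj => ?_
  simp only [Finset.mem_range] at hj
  have hsum : I.blocks.sum = N := I.blocks_sum
  by_cases hjN : 1 + j = N
  · rw [if_pos hjN]
    rw [show N - (1 + j) = 0 from by omega, show N - 1 - j = 0 from by omega,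
      show j + 1 = N from by omega]
    by_cases hsing : I = Composition.single N hN0
    · rw [if_pos hsing]
      have hb : I.blocks = [N] := by rw [hsing, Composition.single_blocks]
      have haN' : a = N := by rw [hadef, hb]; rfl
      rw [hb, mult_single N hN, haN', bcoef_self N hN, stirling_one N hN]
      push_cast [Nat.factorial_zero]
      ring
    · rw [if_neg hsing]
      have haN' : a < N := by
        rcases Nat.lt_or_ge a N with h | h
        · exact h
        · exact absurd (comp_eq_single hN0 I (by omega)) hsing
      rw [bcoef_top_of_lt N a hN haN' (q a) hqa]
      ring
  · rw [if_neg hjN]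
    rw [multK, hsum, ← hadef]
    by_cases hj1 : 1 + j = 1
    · rw [if_pos hj1]
      have hj0 : j = 0 := by omega
      subst hj0
      rw [bcoef_one]
      rw [show N - (1 + 0) = N - 1 from by omega, show N - 1 - 0 = N - 1 from rfl]
      field_simp
    · rw [if_neg hj1]
      have hbc : (∑ i ∈ Finset.range (1 + j),
            (stirlingFirst N (N - i) : ℚ) * ((N - a : ℕ) : ℚ) ^ (1 + j - 1 - i))
          = bcoef N a (1 + j) := rfl
      rw [hbc]
      have hfne : ((Nat.factorial (N - (1 + j)) : ℕ) : ℚ) ≠ 0 :=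
        Nat.cast_ne_zero.mpr (Nat.factorial_ne_zero _)
      rw [show N - 1 - j = N - (1 + j) from by omega, show j + 1 = 1 + j from by omega]
      field_simp
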